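/- Let F be a (p+)-filter on E. Whenever ⟨X_a⃗⟩ ∈ F for every a⃗ ∈ FIN^[<∞], there is ⟨X⟩ ∈ F such that X/a⃗ ⪯ X_a⃗ for every a⃗ ∈ FIN^[<∞] which is a finite initial segment of supp(X). -/

import Mathlib

namespace BlockPaper

variable {F : Type} [Field F]

/-- `X` is an infinite block sequence in `E = ⊕ₙ F`. -/
def IsBlock (X : ℕ → (ℕ →₀ F)) : Prop :=
  (∀ n, X n ≠ 0) ∧ ∀ n, ∀ i ∈ (X n).support, ∀ j ∈ (X (n + 1)).support, i < j

/-- `⟨X⟩`: the linear span of the entries of `X`, with `0` removed. -/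
def spanSet (X : ℕ → (ℕ →₀ F)) : Set (ℕ →₀ F) :=
  {v | v ≠ 0 ∧ v ∈ Submodule.span F (Set.range X)}

/-- `⟨X/n⟩`: the span (minus `0`) of the entries of `X` whose supports lie entirely above `n`. -/
def tailSpanSet (X : ℕ → (ℕ →₀ F)) (n : ℕ) : Set (ℕ →₀ F) :=
  {v | v ≠ 0 ∧ v ∈ Submodule.span F {x : ℕ →₀ F | (∃ k, X k = x) ∧ ∀ i ∈ x.support, n < i}}

/-- `X ⪯ Y`. -/
def PLE (X Y : ℕ → (ℕ →₀ F)) : Prop := spanSet X ⊆ spanSet Y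

/-- `X ⪯* Y`. -/
def PLEs (X Y : ℕ → (ℕ →₀ F)) : Prop := ∃ n, tailSpanSet X n ⊆ spanSet Y

/-- A block filter on `E`: a proper filter of subsets of `E ∖ {0}` containing all
finite-codimensional subspaces (minus `0`) and with a base of sets `⟨X⟩`, `X ∈ E^[∞]`. -/
structure BlockFilter (F : Type) [Field F] where
  sets : Set (Set (ℕ →₀ F))
  nonzero : ∀ S ∈ sets, ∀ v ∈ S, v ≠ 0
  proper : ∅ ∉ sets
  upward : ∀ S ∈ sets, ∀ T : Set (ℕ →₀ F), (∀ v ∈ T, v ≠ 0) → S ⊆ T → T ∈ sets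
  inter : ∀ S ∈ sets, ∀ T ∈ sets, S ∩ T ∈ sets
  codim : ∀ V : Submodule F (ℕ →₀ F), Module.Finite F ((ℕ →₀ F) ⧸ V) →
    {v : ℕ →₀ F | v ≠ 0 ∧ v ∈ V} ∈ sets
  blockBase : ∀ S ∈ sets, ∃ X : ℕ → (ℕ →₀ F),
    IsBlock X ∧ spanSet X ∈ sets ∧ spanSet X ⊆ S

/-- `D ⊆ E` is `𝓕`-dense. -/
def FDense (𝓕 : BlockFilter F) (D : Set (ℕ →₀ F)) : Prop :=
  ∀ X : ℕ → (ℕ →₀ F), IsBlock X → spanSet X ∈ 𝓕.sets →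
    ∃ V : Submodule F (ℕ →₀ F), ¬ Module.Finite F V ∧
      (V : Set (ℕ →₀ F)) \ {0} ⊆ spanSet X ∩ D

/-- `𝓕` is full: every `𝓕`-dense set belongs to `𝓕`. -/
def Full (𝓕 : BlockFilter F) : Prop :=
  ∀ D : Set (ℕ →₀ F), FDense 𝓕 D → D \ {0} ∈ 𝓕.sets

/-- `𝓕` is a `(p)`-filter. -/
def PFilter (𝓕 : BlockFilter F) : Prop :=
  ∀ Xs : ℕ → ℕ → (ℕ →₀ F), (∀ n, IsBlock (Xs n) ∧ spanSet (Xs n) ∈ 𝓕.sets) →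
    ∃ X : ℕ → (ℕ →₀ F), IsBlock X ∧ spanSet X ∈ 𝓕.sets ∧ ∀ n, PLEs X (Xs n)

/-- `𝓕` is a `(p⁺)`-filter: full and a `(p)`-filter. -/
def PPlus (𝓕 : BlockFilter F) : Prop := Full 𝓕 ∧ PFilter 𝓕

/-- A finite block sequence in `E`, as a list. -/
def IsBlockList (l : List (ℕ →₀ F)) : Prop :=
  (∀ v ∈ l, v ≠ 0) ∧
    l.Chain' (fun u v : ℕ →₀ F => ∀ i ∈ u.support, ∀ j ∈ v.support, i < j)

/-- `𝓕` is a strong `(p)`-filter: any family `(X_x⃗)` indexed by finite block sequences,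
with each `⟨X_x⃗⟩ ∈ 𝓕`, has a diagonalization `X` with `X/x⃗ ⪯ X_x⃗` for all finite initial
segments `x⃗` of `X`. -/
def StrongP (𝓕 : BlockFilter F) : Prop :=
  ∀ Xs : List (ℕ →₀ F) → ℕ → (ℕ →₀ F),
    (∀ l, IsBlockList l → IsBlock (Xs l) ∧ spanSet (Xs l) ∈ 𝓕.sets) →
    ∃ X : ℕ → (ℕ →₀ F), IsBlock X ∧ spanSet X ∈ 𝓕.sets ∧
      ∀ k : ℕ, PLE (fun m => X (m + k)) (Xs (List.ofFn fun i : Fin k => X i))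

/-- The outcome of a strategy (for II) against a sequence of opposing moves:
the `k`-th value is the strategy applied to the first `k+1` opposing moves. -/
def outcomeOf {α β : Type*} (st : List α → β) (Ys : ℕ → α) : ℕ → β :=
  fun k => st (List.ofFn fun i : Fin (k + 1) => Ys i)

/-- A legal move for player I in the Gowers game `G[X]`. -/
def LegalG (X Y : ℕ → (ℕ →₀ F)) : Prop := IsBlock Y ∧ PLE Y X

/-- A legal move for player I in the restricted Gowers game `G_𝓕[X]`. -/
def LegalGF (𝓕 : BlockFilter F) (X Y : ℕ → (ℕ →₀ F)) : Prop :=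
  IsBlock Y ∧ PLE Y X ∧ spanSet Y ∈ 𝓕.sets

/-- `α` is a strategy for player II in a Gowers-type game whose legal moves for I are
given by `legal`: against any sequence of legal I-moves, the outcome is a block
sequence whose `k`-th entry lies in the span of I's `k`-th move. -/
def IsStratII (legal : (ℕ → (ℕ →₀ F)) → Prop)
    (α : List (ℕ → (ℕ →₀ F)) → (ℕ →₀ F)) : Prop :=
  ∀ Ys : ℕ → ℕ → (ℕ →₀ F), (∀ k, legal (Ys k)) →
    IsBlock (outcomeOf α Ys) ∧ ∀ k, outcomeOf α Ys k ∈ spanSet (Ys k)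

/-- `𝓕` is strategic. -/
def Strategic (𝓕 : BlockFilter F) : Prop :=
  ∀ X : ℕ → (ℕ →₀ F), IsBlock X → spanSet X ∈ 𝓕.sets →
    ∀ α, IsStratII (LegalG X) α →
      ∃ Ys : ℕ → ℕ → (ℕ →₀ F), (∀ k, LegalG X (Ys k)) ∧
        spanSet (outcomeOf α Ys) ∈ 𝓕.sets

/-- `𝓕` is `+`-strategic. -/
def PlusStrategic (𝓕 : BlockFilter F) : Prop :=
  ∀ X : ℕ → (ℕ →₀ F), IsBlock X → spanSet X ∈ 𝓕.sets →
    ∀ α, IsStratII (LegalGF 𝓕 X) α →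
      ∃ Ys : ℕ → ℕ → (ℕ →₀ F), (∀ k, LegalGF 𝓕 X (Ys k)) ∧
        spanSet (outcomeOf α Ys) ∈ 𝓕.sets

/-- A legal finite position (list of II's moves so far) in a play where I follows `σ`. -/
def LegalPos (σ : List (ℕ →₀ F) → ℕ → (ℕ →₀ F)) (l : List (ℕ →₀ F)) : Prop :=
  IsBlockList l ∧ ∀ k, (h : k < l.length) → l.get ⟨k, h⟩ ∈ spanSet (σ (l.take k))

/-- `σ` is a strategy for player I in the restricted Gowers game `G_𝓕[X]`. -/
def IsStratIGF (𝓕 : BlockFilter F) (X : ℕ → (ℕ →₀ F))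
    (σ : List (ℕ →₀ F) → ℕ → (ℕ →₀ F)) : Prop :=
  ∀ l, LegalPos σ l → LegalGF 𝓕 X (σ l)

/-- `ys` is (the sequence of II's moves of) an infinite play against I's strategy `σ`
in a Gowers-type game; its outcome is `ys` itself. -/
def PlayAgainstI (σ : List (ℕ →₀ F) → ℕ → (ℕ →₀ F)) (ys : ℕ → (ℕ →₀ F)) : Prop :=
  IsBlock ys ∧ ∀ k, ys k ∈ spanSet (σ (List.ofFn fun i : Fin k => ys i))

/-- `ys` is an infinite play against I's strategy `σ` in the asymptotic game `F[X]`. -/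
def PlayAgainstIAsymp (X : ℕ → (ℕ →₀ F)) (σ : List (ℕ →₀ F) → ℕ)
    (ys : ℕ → (ℕ →₀ F)) : Prop :=
  IsBlock ys ∧ ∀ k, ys k ∈ spanSet X ∧
    ∀ i ∈ (ys k).support, σ (List.ofFn fun j : Fin k => ys j) < i

/-- `FIN`: nonempty finite subsets of `ℕ`. -/
abbrev FIN := {s : Finset ℕ // s.Nonempty}

/-- An infinite block sequence in `FIN`. -/
def IsBlockF (A : ℕ → Finset ℕ) : Prop :=
  (∀ n, (A n).Nonempty) ∧ ∀ n, ∀ i ∈ A n, ∀ j ∈ A (n + 1), i < j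

/-- `⟨A⟩`: unions of finitely many (at least one) entries of `A`. -/
def finUnions (A : ℕ → Finset ℕ) : Set (Finset ℕ) :=
  {b | ∃ G : Finset ℕ, G.Nonempty ∧ b = G.sup A}

/-- `⟨A/n⟩`: unions of finitely many entries of `A` contained in `(n, ∞)`. -/
def finUnionsAbove (A : ℕ → Finset ℕ) (n : ℕ) : Set (Finset ℕ) :=
  {b | ∃ G : Finset ℕ, G.Nonempty ∧ (∀ k ∈ G, ∀ i ∈ A k, n < i) ∧ b = G.sup A}

/-- `A ⪯ B` in `FIN`. -/
def PLEF (A B : ℕ → Finset ℕ) : Prop := finUnions A ⊆ finUnions B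

/-- `A ⪯* B` in `FIN`. -/
def PLEsF (A B : ℕ → Finset ℕ) : Prop := ∃ n, finUnionsAbove A n ⊆ finUnions B

/-- Lift a set of finite subsets of `ℕ` to a set of elements of `FIN`. -/
def liftFIN (S : Set (Finset ℕ)) : Set FIN := {a | (a : Finset ℕ) ∈ S}

/-- `U` is an ordered-union ultrafilter on `FIN`. -/
def OrderedUnion (U : Ultrafilter FIN) : Prop :=
  ∀ S ∈ U, ∃ A : ℕ → Finset ℕ, IsBlockF A ∧
    liftFIN (finUnions A) ∈ U ∧ liftFIN (finUnions A) ⊆ S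

/-- `U` is stable. -/
def Stable (U : Ultrafilter FIN) : Prop :=
  ∀ As : ℕ → ℕ → Finset ℕ, (∀ n, IsBlockF (As n) ∧ liftFIN (finUnions (As n)) ∈ U) →
    ∃ B : ℕ → Finset ℕ, IsBlockF B ∧ liftFIN (finUnions B) ∈ U ∧ ∀ n, PLEsF B (As n)

/-- `supp(X)`: the sequence of supports of the entries of `X`. -/
def suppSeq (X : ℕ → (ℕ →₀ F)) : ℕ → Finset ℕ := fun k => (X k).support

/-- `supp(𝓕)`: the collection of `A ⊆ FIN` containing `{supp v : v ∈ S}` for some `S ∈ 𝓕`. -/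
def suppFilter (𝓕 : BlockFilter F) : Set (Set FIN) :=
  {A | ∃ S ∈ 𝓕.sets, ∀ a : FIN, (∃ v ∈ S, (a : Finset ℕ) = v.support) → a ∈ A}

/-- A finite block sequence in `FIN`, as a list. -/
def IsBlockListF (l : List (Finset ℕ)) : Prop :=
  (∀ a ∈ l, a.Nonempty) ∧
    l.Chain' (fun a b : Finset ℕ => ∀ i ∈ a, ∀ j ∈ b, i < j)

end BlockPaper

namespace BlockPaper

variable {F : Type} [Field F]

/-! ### Auxiliary material for `stmt1` -/

lemma isBlockListF_nil : IsBlockListF ([] : List (Finset ℕ)) :=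
  ⟨by simp, List.isChain_nil⟩

lemma supp_ne {X : ℕ → ℕ →₀ F} (h : IsBlock X) (n : ℕ) : (X n).support.Nonempty :=
  Finsupp.support_nonempty_iff.2 (h.1 n)

lemma block_lt {X : ℕ → ℕ →₀ F} (h : IsBlock X) :
    ∀ {m n : ℕ}, m < n → ∀ i ∈ (X m).support, ∀ j ∈ (X n).support, i < j := by
  intro m n
  induction n with
  | zero => intro hmn; exact absurd hmn (Nat.not_lt_zero m)
  | succ n ih =>
    intro hmn i hi j hj
    rcases Nat.lt_succ_iff_lt_or_eq.1 hmn with h' | h'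
    · obtain ⟨x, hx⟩ := supp_ne h n
      exact (ih h' i hi x hx).trans (h.2 n x hx j hj)
    · subst h'
      exact h.2 m i hi j hj

lemma block_disjoint {X : ℕ → ℕ →₀ F} (h : IsBlock X) {m n : ℕ} (hmn : m ≠ n) :
    Disjoint (X m).support (X n).support := by
  rcases hmn.lt_or_gt with h' | h'
  · exact Finset.disjoint_left.2 fun {a} ha hb => lt_irrefl a (block_lt h h' a ha a hb)
  · exact Finset.disjoint_right.2 fun {a} ha hb => lt_irrefl a (block_lt h h' a ha a hb)

lemma support_sum_smul {w : ℕ → ℕ →₀ F}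
    (hd : ∀ m n, m ≠ n → Disjoint (w m).support (w n).support)
    (s : Finset ℕ) (g : ℕ → F) (hg : ∀ i ∈ s, g i ≠ 0) :
    (∑ i ∈ s, g i • w i).support = s.biUnion fun i => (w i).support := by
  rw [Finsupp.support_sum_eq_biUnion]
  · exact Finset.biUnion_congr rfl fun i hi => Finsupp.support_smul_eq (hg i hi)
  · intro i j hij
    exact Disjoint.mono Finsupp.support_smul Finsupp.support_smul (hd i j hij)

lemma support_finsupp_sum {w : ℕ → ℕ →₀ F}
    (hd : ∀ m n, m ≠ n → Disjoint (w m).support (w n).support) (c : ℕ →₀ F) :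
    (c.sum fun i a => a • w i).support = c.support.biUnion fun i => (w i).support := by
  have hrfl : (c.sum fun i a => a • w i) = ∑ i ∈ c.support, c i • w i := rfl
  rw [hrfl]
  exact support_sum_smul hd c.support (fun i => c i) fun i hi => Finsupp.mem_support_iff.1 hi

section Cnt

variable (N : ℕ → ℕ)

/-- `j` has a "next" element in `s` which is at most `N j`. -/
def Bad (s : Finset ℕ) (j : ℕ) : Prop :=
  ∃ j' ∈ s, j < j' ∧ j' ≤ N j ∧ ∀ i ∈ s, j < i → j' ≤ i

open Classical in
/-- The number of `Bad` positions of `s`. -/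
noncomputable def cnt (s : Finset ℕ) : ℕ := (s.filter fun j => Bad N s j).card

lemma card_filter_erase (s : Finset ℕ) (P : ℕ → Prop) [DecidablePred P] (m : ℕ)
    (hm : m ∈ s) :
    (s.filter P).card = ((s.erase m).filter P).card + (if P m then 1 else 0) := by
  conv_lhs => rw [← Finset.insert_erase hm]
  rw [Finset.filter_insert]
  by_cases h : P m
  · rw [if_pos h, if_pos h, Finset.card_insert_of_notMem
      (fun hmem => (Finset.notMem_erase m s) (Finset.filter_subset _ _ hmem))]
  · rw [if_neg h, if_neg h, add_zero]

lemma cnt_union {s₁ s₂ : Finset ℕ} (h₁ : s₁.Nonempty) (h₂ : s₂.Nonempty)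
    (hord : ∀ a ∈ s₁, ∀ b ∈ s₂, a < b) :
    cnt N (s₁ ∪ s₂) = cnt N s₁ + cnt N s₂ +
      (if s₂.min' h₂ ≤ N (s₁.max' h₁) then 1 else 0) := by
  classical
  have hdisj : Disjoint s₁ s₂ :=
    Finset.disjoint_left.2 fun {a} ha hb => lt_irrefl a (hord a ha a hb)
  set m := s₁.max' h₁ with hm
  have hms : m ∈ s₁ := Finset.max'_mem _ _
  have hC : ∀ j ∈ s₂, (Bad N (s₁ ∪ s₂) j ↔ Bad N s₂ j) := by
    intro j hj
    constructor
    · rintro ⟨j', hj', hlt, hle, hmin⟩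
      have hj'2 : j' ∈ s₂ := by
        rcases Finset.mem_union.1 hj' with h | h
        · exact absurd (hord _ h _ hj) (by omega)
        · exact h
      exact ⟨j', hj'2, hlt, hle, fun i hi hji => hmin i (Finset.mem_union_right _ hi) hji⟩
    · rintro ⟨j', hj', hlt, hle, hmin⟩
      refine ⟨j', Finset.mem_union_right _ hj', hlt, hle, ?_⟩
      intro i hi hji
      rcases Finset.mem_union.1 hi with h | h
      · exact absurd (hord _ h _ hj) (by omega)
      · exact hmin i h hji
  have hA : ∀ j ∈ s₁.erase m, (Bad N (s₁ ∪ s₂) j ↔ Bad N s₁ j) := by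
    intro j hj
    obtain ⟨hjm, hj1⟩ := Finset.mem_erase.1 hj
    have hjltm : j < m := lt_of_le_of_ne (Finset.le_max' _ _ hj1) hjm
    constructor
    · rintro ⟨j', hj', hlt, hle, hmin⟩
      have hj'1 : j' ∈ s₁ := by
        have h5 := hmin m (Finset.mem_union_left _ hms) hjltm
        rcases Finset.mem_union.1 hj' with h | h
        · exact h
        · exact absurd (hord m hms j' h) (by omega)
      exact ⟨j', hj'1, hlt, hle, fun i hi => hmin i (Finset.mem_union_left _ hi)⟩
    · rintro ⟨j', hj', hlt, hle, hmin⟩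
      refine ⟨j', Finset.mem_union_left _ hj', hlt, hle, ?_⟩
      intro i hi hji
      rcases Finset.mem_union.1 hi with h | h
      · exact hmin i h hji
      · exact le_of_lt (lt_of_le_of_lt (Finset.le_max' _ _ hj') (hord m hms i h))
  have hBm : ¬ Bad N s₁ m := by
    rintro ⟨j', hj', hlt, -, -⟩
    exact absurd (Finset.le_max' _ _ hj') (by omega)
  have hBm2 : Bad N (s₁ ∪ s₂) m ↔ s₂.min' h₂ ≤ N m := by
    constructor
    · rintro ⟨j', hj', hlt, hle, hmin⟩
      have hj'2 : j' ∈ s₂ := by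
        rcases Finset.mem_union.1 hj' with h | h
        · exact absurd (Finset.le_max' _ _ h) (by omega)
        · exact h
      have h5 := hmin _ (Finset.mem_union_right _ (Finset.min'_mem _ h₂))
        (hord m hms _ (Finset.min'_mem _ h₂))
      have h6 := Finset.min'_le _ _ hj'2
      omega
    · intro hle
      refine ⟨s₂.min' h₂, Finset.mem_union_right _ (Finset.min'_mem _ h₂),
        hord m hms _ (Finset.min'_mem _ h₂), hle, ?_⟩
      intro i hi hmi
      rcases Finset.mem_union.1 hi with h | h
      · exact absurd (Finset.le_max' _ _ h) (by omega)
      · exact Finset.min'_le _ _ h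
  -- counting
  have e1 : cnt N (s₁ ∪ s₂) =
      (s₁.filter fun j => Bad N (s₁ ∪ s₂) j).card + (s₂.filter fun j => Bad N (s₁ ∪ s₂) j).card := by
    rw [cnt, Finset.filter_union]
    exact Finset.card_union_of_disjoint
      (hdisj.mono (Finset.filter_subset _ _) (Finset.filter_subset _ _))
  have e2 : (s₂.filter fun j => Bad N (s₁ ∪ s₂) j).card = cnt N s₂ := by
    rw [cnt]
    congr 1
    exact Finset.filter_congr hC
  have herase : (s₁.erase m).filter (fun j => Bad N (s₁ ∪ s₂) j) =
      (s₁.erase m).filter (fun j => Bad N s₁ j) := Finset.filter_congr hA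
  have e3 : (s₁.filter fun j => Bad N (s₁ ∪ s₂) j).card =
      ((s₁.erase m).filter fun j => Bad N s₁ j).card + (if s₂.min' h₂ ≤ N m then 1 else 0) := by
    rw [card_filter_erase s₁ _ m hms, herase]
    congr 1
    by_cases hcond : s₂.min' h₂ ≤ N m
    · rw [if_pos (hBm2.2 hcond), if_pos hcond]
    · rw [if_neg (fun hb => hcond (hBm2.1 hb)), if_neg hcond]
  have e4 : cnt N s₁ = ((s₁.erase m).filter fun j => Bad N s₁ j).card := by
    rw [cnt, card_filter_erase s₁ _ m hms, if_neg hBm, add_zero]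
  rw [e1, e2, e3, e4]
  omega

lemma cnt_biUnion_even (P : ℕ → Finset ℕ) (hP : ∀ k, (P k).Nonempty)
    (hord : ∀ k k', k < k' → ∀ a ∈ P k, ∀ b ∈ P k', a < b)
    (hsp : ∀ k k', k < k' → N ((P k).max' (hP k)) < (P k').min' (hP k'))
    (hev : ∀ k, Even (cnt N (P k))) :
    ∀ K : Finset ℕ, K.Nonempty → Even (cnt N (K.biUnion P)) := by
  classical
  intro K
  induction K using Finset.strongInduction with
  | _ K ih =>
    intro hK
    set m := K.min' hK with hm
    have hmK : m ∈ K := Finset.min'_mem _ _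
    rcases (K.erase m).eq_empty_or_nonempty with he | he
    · rcases (Finset.erase_eq_empty_iff K m).1 he with h | h
      · exact absurd h (Finset.nonempty_iff_ne_empty.1 hK)
      · rw [h, Finset.singleton_biUnion]
        exact hev m
    · have hbu : K.biUnion P = P m ∪ (K.erase m).biUnion P := by
        conv_lhs => rw [← Finset.insert_erase hmK]
        rw [Finset.biUnion_insert]
      have hne2 : ((K.erase m).biUnion P).Nonempty := by
        obtain ⟨k, hk⟩ := he
        obtain ⟨x, hx⟩ := hP k
        exact ⟨x, Finset.mem_biUnion.2 ⟨k, hk, hx⟩⟩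
      have hmlt : ∀ k ∈ K.erase m, m < k := by
        intro k hk
        obtain ⟨hne', hk'⟩ := Finset.mem_erase.1 hk
        exact lt_of_le_of_ne (Finset.min'_le _ _ hk') (Ne.symm hne')
      have hordU : ∀ a ∈ P m, ∀ b ∈ (K.erase m).biUnion P, a < b := by
        intro a ha b hb
        obtain ⟨k, hk, hbk⟩ := Finset.mem_biUnion.1 hb
        exact hord m k (hmlt k hk) a ha b hbk
      have hindic : ¬ (((K.erase m).biUnion P).min' hne2 ≤ N ((P m).max' (hP m))) := by
        have hmem := Finset.min'_mem _ hne2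
        obtain ⟨k, hk, hbk⟩ := Finset.mem_biUnion.1 hmem
        have h1 := hsp m k (hmlt k hk)
        have h2 := Finset.min'_le _ _ hbk
        omega
      rw [hbu, cnt_union N (hP m) hne2 hordU, if_neg hindic]
      have hEe := ih (K.erase m) (Finset.erase_ssubset hmK) he
      simpa using (hev m).add hEe

end Cnt

lemma min'_eq_of_union {s₁ s₂ s : Finset ℕ} (h₁ : s₁.Nonempty)
    (hord : ∀ a ∈ s₁, ∀ b ∈ s₂, a < b)
    (hs : s = s₁ ∪ s₂) (h : s.Nonempty) : s.min' h = s₁.min' h₁ := by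
  subst hs
  apply le_antisymm
  · exact Finset.min'_le _ _ (Finset.mem_union_left _ (Finset.min'_mem _ h₁))
  · apply Finset.le_min'
    intro y hy
    rcases Finset.mem_union.1 hy with h' | h'
    · exact Finset.min'_le _ _ h'
    · exact le_of_lt (hord _ (Finset.min'_mem _ h₁) _ h')

lemma max'_eq_of_union {s₁ s₂ s : Finset ℕ} (h₂ : s₂.Nonempty)
    (hord : ∀ a ∈ s₁, ∀ b ∈ s₂, a < b)
    (hs : s = s₁ ∪ s₂) (h : s.Nonempty) : s.max' h = s₂.max' h₂ := by
  subst hs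
  apply le_antisymm
  · apply Finset.max'_le
    intro y hy
    rcases Finset.mem_union.1 hy with h' | h'
    · exact le_of_lt (hord _ h' _ (Finset.max'_mem _ h₂))
    · exact Finset.le_max' _ _ h'
  · exact Finset.le_max' _ _ (Finset.mem_union_right _ (Finset.max'_mem _ h₂))

lemma blockListF_cons {a : Finset ℕ} {l : List (Finset ℕ)} (h : IsBlockListF (a :: l)) :
    IsBlockListF l ∧ ∀ b ∈ l, ∀ j ∈ b, ∀ i ∈ a, i < j := by
  induction l generalizing a with
  | nil => exact ⟨isBlockListF_nil, by simp⟩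
  | cons b l ih =>
    obtain ⟨hne, hch⟩ := h
    rw [List.Chain', List.isChain_cons_cons] at hch
    have hbl : IsBlockListF (b :: l) := ⟨fun x hx => hne x (List.mem_cons_of_mem _ hx), hch.2⟩
    obtain ⟨hl, hrec⟩ := ih hbl
    refine ⟨hbl, ?_⟩
    intro c hc j hj i hi
    rcases List.mem_cons.1 hc with h' | hc'
    · subst h'
      exact hch.1 i hi j hj
    · obtain ⟨x, hx⟩ : b.Nonempty := hne b (by simp)
      exact (hch.1 i hi x hx).trans (hrec c hc' j hj x hx)

lemma blockListF_length_aux : ∀ (l : List (Finset ℕ)), IsBlockListF l → ∀ lo m : ℕ,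
    (∀ a ∈ l, ∀ i ∈ a, lo ≤ i ∧ i ≤ m) → l.length ≤ m + 1 - lo := by
  intro l
  induction l with
  | nil => intro _ lo m _; simp
  | cons a l ih =>
    intro h lo m hb
    obtain ⟨hl, habove⟩ := blockListF_cons h
    obtain ⟨x, hx⟩ : a.Nonempty := h.1 a (by simp)
    have hx' := hb a (by simp) x hx
    have hlen : l.length ≤ m + 1 - (x + 1) := by
      refine ih hl (x + 1) m ?_
      intro b hbmem i hi
      exact ⟨habove b hbmem i hi x hx, (hb b (List.mem_cons_of_mem _ hbmem) i hi).2⟩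
    simp only [List.length_cons]
    omega

lemma blockListF_length_le {l : List (Finset ℕ)} (hl : IsBlockListF l) {m : ℕ}
    (hb : ∀ a ∈ l, ∀ i ∈ a, i ≤ m) : l.length ≤ m + 1 := by
  have h := blockListF_length_aux l hl 0 m (fun a ha i hi => ⟨Nat.zero_le _, hb a ha i hi⟩)
  omega

lemma finite_blockLists (m : ℕ) :
    {l : List (Finset ℕ) | IsBlockListF l ∧ ∀ a ∈ l, ∀ i ∈ a, i ≤ m}.Finite := by
  classical
  have h1 : {l : List {a : Finset ℕ // a ∈ (Finset.range (m+1)).powerset} |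
      l.length ≤ m + 1}.Finite := List.finite_length_le _ _
  apply Set.Finite.subset (h1.image (List.map Subtype.val))
  rintro l ⟨hbl, hb⟩
  have hmem : ∀ a ∈ l, a ∈ (Finset.range (m+1)).powerset := by
    intro a ha
    rw [Finset.mem_powerset]
    intro i hi
    rw [Finset.mem_range]
    exact Nat.lt_succ_of_le (hb a ha i hi)
  refine ⟨l.pmap (fun a h => ⟨a, h⟩) hmem, ?_, ?_⟩
  · simp only [Set.mem_setOf_eq, List.length_pmap]
    exact blockListF_length_le hbl hb
  · rw [List.map_pmap]
    simp [List.pmap_eq_map]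

section Nf

variable (nf : List (Finset ℕ) → ℕ)

noncomputable def Nfun (m : ℕ) : ℕ :=
  max m (((finite_blockLists m).toFinset).sup nf)

lemma self_le_Nfun (m : ℕ) : m ≤ Nfun nf m := le_max_left _ _

lemma Nfun_mono {m m' : ℕ} (h : m ≤ m') : Nfun nf m ≤ Nfun nf m' := by
  apply max_le (le_trans h (self_le_Nfun nf m'))
  apply le_max_of_le_right
  apply Finset.sup_mono
  rw [Set.Finite.toFinset_subset_toFinset]
  rintro l ⟨h1, h2⟩
  exact ⟨h1, fun a ha i hi => le_trans (h2 a ha i hi) h⟩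

lemma nf_le_Nfun {l : List (Finset ℕ)} (hl : IsBlockListF l) {m : ℕ}
    (hb : ∀ a ∈ l, ∀ i ∈ a, i ≤ m) : nf l ≤ Nfun nf m :=
  le_max_of_le_right (Finset.le_sup ((Set.Finite.mem_toFinset _).2 ⟨hl, hb⟩))

end Nf

lemma not_finite_span {w : ℕ → ℕ →₀ F} (hne : ∀ k, (w k).support.Nonempty)
    (hd : ∀ m n, m ≠ n → Disjoint (w m).support (w n).support) :
    ¬ Module.Finite F (Submodule.span F (Set.range w)) := by
  classical
  intro hfin
  have hli : LinearIndependent F w := by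
    rw [linearIndependent_iff']
    intro s g hsum i hi
    by_contra hgi
    have hne' : (∑ i ∈ s.filter (fun i => g i ≠ 0), g i • w i) = ∑ i ∈ s, g i • w i :=
      Finset.sum_filter_of_ne (fun x _ hfx hgx => hfx (by rw [hgx, zero_smul]))
    have hsupp := support_sum_smul hd (s.filter (fun i => g i ≠ 0)) g
      (fun i hi => (Finset.mem_filter.1 hi).2)
    rw [hne', hsum] at hsupp
    have hifil : i ∈ s.filter (fun i => g i ≠ 0) := Finset.mem_filter.2 ⟨hi, hgi⟩
    obtain ⟨x, hx⟩ := hne i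
    have hx0 : x ∈ (0 : ℕ →₀ F).support := by
      rw [hsupp]
      exact Finset.mem_biUnion.2 ⟨i, hifil, hx⟩
    simp at hx0
  haveI := hfin
  have h1 := Module.rank_lt_aleph0 F (↥(Submodule.span F (Set.range w)))
  rw [rank_span hli, Cardinal.mk_range_eq w hli.injective, Cardinal.mk_nat] at h1
  exact lt_irrefl _ h1

end BlockPaper

set_option maxHeartbeats 1600000 in
open BlockPaper in
/-- If `𝓕` is a `(p⁺)`-filter on `E` and `⟨X_a⃗⟩ ∈ 𝓕` for every `a⃗ ∈ FIN^[<∞]`, then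
there is `⟨X⟩ ∈ 𝓕` with `X/a⃗ ⪯ X_a⃗` for every finite initial segment `a⃗` of `supp(X)`. -/
theorem stmt1 {F : Type} [Field F] [Countable F] (𝓕 : BlockFilter F) (h𝓕 : PPlus 𝓕)
    (Xs : List (Finset ℕ) → ℕ → (ℕ →₀ F))
    (hXs : ∀ l, IsBlockListF l → IsBlock (Xs l) ∧ spanSet (Xs l) ∈ 𝓕.sets) :
    ∃ X : ℕ → (ℕ →₀ F), IsBlock X ∧ spanSet X ∈ 𝓕.sets ∧
      ∀ k : ℕ, PLE (fun m => X (m + k)) (Xs (List.ofFn fun i : Fin k => (X i).support)) := by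
  classical
  obtain ⟨hFull, hPf⟩ := h𝓕
  obtain ⟨e, he⟩ := exists_surjective_nat (List (Finset ℕ))
  set G : ℕ → ℕ → (ℕ →₀ F) := fun t => if IsBlockListF (e t) then Xs (e t) else Xs [] with hG
  have hGgood : ∀ t, IsBlock (G t) ∧ spanSet (G t) ∈ 𝓕.sets := by
    intro t
    simp only [hG]
    split_ifs with h
    · exact hXs _ h
    · exact hXs [] isBlockListF_nil
  obtain ⟨Y, hYb, hYmem, hYp⟩ := hPf G hGgood
  have hYne : ∀ n, (Y n).support.Nonempty := supp_ne hYb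
  have hPl : ∀ l, IsBlockListF l → PLEs Y (Xs l) := by
    intro l hl
    obtain ⟨t, ht⟩ := he l
    have h1 := hYp t
    simp only [hG, ht, if_pos hl] at h1
    exact h1
  set nf : List (Finset ℕ) → ℕ := fun l => if h : IsBlockListF l then (hPl l h).choose else 0
    with hnfdef
  have hnf : ∀ l (hl : IsBlockListF l), tailSpanSet Y (nf l) ⊆ spanSet (Xs l) := by
    intro l hl
    simp only [hnfdef, dif_pos hl]
    exact (hPl l hl).choose_spec
  set N : ℕ → ℕ := Nfun nf with hNdef
  have hNid : ∀ m, m ≤ N m := self_le_Nfun nf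
  have hNmono : ∀ {m m'}, m ≤ m' → N m ≤ N m' := fun h => Nfun_mono nf h
  set D : Set (ℕ →₀ F) := {v | v ≠ 0 ∧ v ∈ Submodule.span F (Set.range Y) ∧
      v ∈ Submodule.span F (Set.range (Xs ([] : List (Finset ℕ)))) ∧
      Even (cnt N v.support)} with hD
  -- D is dense
  have hDense : FDense 𝓕 D := by
    intro X₀ hX₀b hX₀mem
    have hS : (spanSet Y ∩ spanSet (Xs []) ∩ spanSet X₀) ∈ 𝓕.sets :=
      𝓕.inter _ (𝓕.inter _ hYmem _ (hXs [] isBlockListF_nil).2) _ hX₀mem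
    obtain ⟨Z, hZb, hZmem, hZsub⟩ := 𝓕.blockBase _ hS
    have hZne : ∀ t, (Z t).support.Nonempty := supp_ne hZb
    have hminmono : StrictMono (fun t => (Z t).support.min' (hZne t)) := by
      apply strictMono_nat_of_lt_succ
      intro t
      exact hZb.2 t _ (Finset.min'_mem _ _) _ (Finset.min'_mem _ _)
    have hminlarge : ∀ t, t ≤ (Z t).support.min' (hZne t) := fun t => hminmono.le_apply
    set tseq : ℕ → ℕ :=
      fun r => Nat.rec 0 (fun _ prev => N ((Z prev).support.max' (hZne prev)) + 1) r with htseq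
    set z : ℕ → (ℕ →₀ F) := fun r => Z (tseq r) with hz
    have hzne : ∀ r, (z r).support.Nonempty := fun r => hZne _
    have hspace0 : ∀ r, N ((z r).support.max' (hzne r)) < (z (r+1)).support.min' (hzne (r+1)) := by
      intro r
      have h1 : tseq (r+1) = N ((z r).support.max' (hzne r)) + 1 := rfl
      have h2 : tseq (r+1) ≤ (z (r+1)).support.min' (hzne (r+1)) := hminlarge (tseq (r+1))
      omega
    have hmaxmono : ∀ {r r'}, r ≤ r' →
        (z r).support.max' (hzne r) ≤ (z r').support.max' (hzne r') := by
      have hm : ∀ r, (z r).support.max' (hzne r) < (z (r+1)).support.max' (hzne (r+1)) := by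
        intro r
        have h1 := hspace0 r
        have h2 : (z (r+1)).support.min' (hzne (r+1)) ≤ (z (r+1)).support.max' (hzne (r+1)) :=
          Finset.min'_le _ _ (Finset.max'_mem _ _)
        have h3 := hNid ((z r).support.max' (hzne r))
        omega
      exact fun {r r'} h => (strictMono_nat_of_lt_succ hm).monotone h
    have hspace : ∀ r r', r < r' →
        N ((z r).support.max' (hzne r)) < (z r').support.min' (hzne r') := by
      intro r r' h
      obtain ⟨r'', rfl⟩ : ∃ r'', r' = r'' + 1 := ⟨r' - 1, by omega⟩
      have h2 := hspace0 r''
      have h3 := hNmono (hmaxmono (show r ≤ r'' by omega))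
      omega
    have hzord : ∀ r r', r < r' → ∀ a ∈ (z r).support, ∀ b ∈ (z r').support, a < b := by
      intro r r' h a ha b hb
      have h1 := hspace r r' h
      have h2 := Finset.le_max' _ a ha
      have h3 := Finset.min'_le _ b hb
      have h4 := hNid ((z r).support.max' (hzne r))
      omega
    have hpair : ∀ k : ℕ, ∃ p : ℕ × ℕ, 3*k ≤ p.1 ∧ p.1 < p.2 ∧ p.2 ≤ 3*k+2 ∧
        (Even (cnt N (z p.1).support) ↔ Even (cnt N (z p.2).support)) := by
      intro k
      by_cases h01 : (Even (cnt N (z (3*k)).support) ↔ Even (cnt N (z (3*k+1)).support))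
      · exact ⟨(3*k, 3*k+1), by omega, by omega, by omega, h01⟩
      · by_cases h12 : (Even (cnt N (z (3*k+1)).support) ↔ Even (cnt N (z (3*k+2)).support))
        · exact ⟨(3*k+1, 3*k+2), by omega, by omega, by omega, h12⟩
        · exact ⟨(3*k, 3*k+2), by omega, by omega, by omega, by tauto⟩
    set pk : ℕ → ℕ × ℕ := fun k => (hpair k).choose with hpk
    have hpk1 : ∀ k, 3*k ≤ (pk k).1 := fun k => (hpair k).choose_spec.1
    have hpk12 : ∀ k, (pk k).1 < (pk k).2 := fun k => (hpair k).choose_spec.2.1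
    have hpk2 : ∀ k, (pk k).2 ≤ 3*k+2 := fun k => (hpair k).choose_spec.2.2.1
    have hpkev : ∀ k, (Even (cnt N (z (pk k).1).support) ↔ Even (cnt N (z (pk k).2).support)) :=
      fun k => (hpair k).choose_spec.2.2.2
    set w : ℕ → (ℕ →₀ F) := fun k => z (pk k).1 + z (pk k).2 with hw
    have hwsupp : ∀ k, (w k).support = (z (pk k).1).support ∪ (z (pk k).2).support := by
      intro k
      apply Finsupp.support_add_eq
      exact Finset.disjoint_left.2 fun {a} ha hb =>
        lt_irrefl a (hzord _ _ (hpk12 k) a ha a hb)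
    have hwne : ∀ k, (w k).support.Nonempty := by
      intro k
      rw [hwsupp k]
      exact (hzne _).mono Finset.subset_union_left
    have hwmax : ∀ k, (w k).support.max' (hwne k) = (z (pk k).2).support.max' (hzne _) :=
      fun k => max'_eq_of_union (hzne _)
        (fun a ha b hb => hzord _ _ (hpk12 k) a ha b hb) (hwsupp k) _
    have hwmin : ∀ k, (w k).support.min' (hwne k) = (z (pk k).1).support.min' (hzne _) :=
      fun k => min'_eq_of_union (hzne _)
        (fun a ha b hb => hzord _ _ (hpk12 k) a ha b hb) (hwsupp k) _
    have hwev : ∀ k, Even (cnt N (w k).support) := by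
      intro k
      rw [hwsupp k, cnt_union N (hzne (pk k).1) (hzne (pk k).2)
        (fun a ha b hb => hzord _ _ (hpk12 k) a ha b hb),
        if_neg (by have h5 := hspace _ _ (hpk12 k); omega)]
      simpa [Nat.even_add] using hpkev k
    have hword : ∀ k k', k < k' → ∀ a ∈ (w k).support, ∀ b ∈ (w k').support, a < b := by
      intro k k' hkk a ha b hb
      have e1 := hpk1 k; have e2 := hpk2 k; have e3 := hpk12 k
      have f1 := hpk1 k'; have f2 := hpk2 k'; have f3 := hpk12 k'
      rw [hwsupp] at ha hb
      rcases Finset.mem_union.1 ha with h1 | h1 <;> rcases Finset.mem_union.1 hb with h2 | h2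
      · exact hzord _ _ (by omega) _ h1 _ h2
      · exact hzord _ _ (by omega) _ h1 _ h2
      · exact hzord _ _ (by omega) _ h1 _ h2
      · exact hzord _ _ (by omega) _ h1 _ h2
    have hwspace : ∀ k k', k < k' →
        N ((w k).support.max' (hwne k)) < (w k').support.min' (hwne k') := by
      intro k k' hkk
      rw [hwmax k, hwmin k']
      apply hspace
      have e2 := hpk2 k; have f1 := hpk1 k'; have f3 := hpk12 k'; omega
    have hdisjw : ∀ m n, m ≠ n → Disjoint (w m).support (w n).support := by
      intro m n hmn
      rcases hmn.lt_or_gt with h | h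
      · exact Finset.disjoint_left.2 fun {a} ha hb => lt_irrefl a (hword _ _ h a ha a hb)
      · exact Finset.disjoint_right.2 fun {a} ha hb => lt_irrefl a (hword _ _ h a ha a hb)
    have hwmemZ : ∀ k, w k ∈ Submodule.span F (Set.range Z) :=
      fun k => Submodule.add_mem _ (Submodule.subset_span ⟨_, rfl⟩)
        (Submodule.subset_span ⟨_, rfl⟩)
    refine ⟨Submodule.span F (Set.range w), not_finite_span hwne hdisjw, ?_⟩
    rintro v ⟨hvV, hv0⟩
    have hvne : v ≠ 0 := by simpa using hv0
    have hvZ : v ∈ Submodule.span F (Set.range Z) := by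
      refine Submodule.span_le.2 ?_ hvV
      rintro x ⟨k, rfl⟩
      exact hwmemZ k
    have hvS := hZsub ⟨hvne, hvZ⟩
    obtain ⟨⟨hvY, hvXnil⟩, hvX₀⟩ := hvS
    refine ⟨hvX₀, hvne, hvY.2, hvXnil.2, ?_⟩
    obtain ⟨c, hc⟩ := Finsupp.mem_span_range_iff_exists_finsupp.1 hvV
    have hcsupp : c.support.Nonempty := by
      rcases c.support.eq_empty_or_nonempty with h | h
      · exfalso
        apply hvne
        rw [← hc, Finsupp.support_eq_empty.1 h]
        simp
      · exact h
    have hsupp : v.support = c.support.biUnion fun k => (w k).support := by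
      rw [← hc]
      exact support_finsupp_sum hdisjw c
    rw [hsupp]
    exact cnt_biUnion_even N (fun k => (w k).support) hwne hword hwspace hwev c.support hcsupp
  -- apply fullness and extract the block sequence
  have hDmem : D \ {0} ∈ 𝓕.sets := hFull D hDense
  obtain ⟨W, hWb, hWmem, hWsub⟩ := 𝓕.blockBase _ hDmem
  have hWne : ∀ i, (W i).support.Nonempty := supp_ne hWb
  have hWD : ∀ v, v ∈ spanSet W → v ∈ D := fun v hv => (hWsub hv).1
  have hWentry : ∀ i, W i ∈ spanSet W := fun i => ⟨hWb.1 i, Submodule.subset_span ⟨i, rfl⟩⟩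
  have hstep : ∀ j, N ((W j).support.max' (hWne j)) < (W (j+1)).support.min' (hWne (j+1)) := by
    intro j
    have hdisjj : Disjoint (W j).support (W (j+1)).support := block_disjoint hWb (by omega)
    have hsa : (W j + W (j+1)).support = (W j).support ∪ (W (j+1)).support :=
      Finsupp.support_add_eq hdisjj
    have hu : (W j + W (j+1)) ∈ spanSet W := by
      refine ⟨?_, Submodule.add_mem _ (hWentry j).2 (hWentry (j+1)).2⟩
      rw [← Finsupp.support_nonempty_iff, hsa]
      exact (hWne j).mono Finset.subset_union_left
    have hevu := (hWD _ hu).2.2.2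
    have hev1 := (hWD _ (hWentry j)).2.2.2
    have hev2 := (hWD _ (hWentry (j+1))).2.2.2
    rw [hsa, cnt_union N (hWne j) (hWne (j+1)) (fun a ha b hb => hWb.2 j a ha b hb)] at hevu
    by_contra hcon
    push_neg at hcon
    rw [if_pos hcon] at hevu
    rcases hev1 with ⟨a, ha⟩
    rcases hev2 with ⟨b, hb⟩
    rcases hevu with ⟨d, hd⟩
    omega
  have hWmaxmono : ∀ {i i'}, i ≤ i' →
      (W i).support.max' (hWne i) ≤ (W i').support.max' (hWne i') := by
    have hm : ∀ i, (W i).support.max' (hWne i) < (W (i+1)).support.max' (hWne (i+1)) :=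
      fun i => hWb.2 i _ (Finset.max'_mem _ _) _ (Finset.max'_mem _ _)
    exact fun {i i'} h => (strictMono_nat_of_lt_succ hm).monotone h
  have hent : ∀ k i, k ≤ i →
      W i ∈ Submodule.span F (Set.range (Xs (List.ofFn fun j : Fin k => (W j).support))) := by
    intro k i hki
    rcases k with _ | k'
    · have h1 := (hWD _ (hWentry i)).2.2.1
      simpa using h1
    · set l : List (Finset ℕ) := List.ofFn (fun j : Fin (k'+1) => (W j).support) with hldef
      have hlb : IsBlockListF l := by
        constructor
        · intro a ha
          rw [hldef, List.mem_ofFn] at ha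
          obtain ⟨j, rfl⟩ := ha
          exact hWne j
        · rw [hldef, List.Chain', List.isChain_ofFn]
          intro idx hidx
          exact hWb.2 idx
      have hlbd : ∀ a ∈ l, ∀ x ∈ a, x ≤ (W k').support.max' (hWne k') := by
        intro a ha x hx
        rw [hldef, List.mem_ofFn] at ha
        obtain ⟨j, rfl⟩ := ha
        have h1 : x ≤ (W (j : ℕ)).support.max' (hWne j) := Finset.le_max' _ x hx
        have h2 : (W (j : ℕ)).support.max' (hWne j) ≤ (W k').support.max' (hWne k') :=
          hWmaxmono (by omega)
        omega
      have hnfle : nf l ≤ N ((W k').support.max' (hWne k')) := nf_le_Nfun nf hlb hlbd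
      obtain ⟨i', rfl⟩ : ∃ i', i = i' + 1 := ⟨i - 1, by omega⟩
      have h1 := hstep i'
      have h2 := hNmono (hWmaxmono (show k' ≤ i' by omega))
      have hsuppabove : ∀ x ∈ (W (i'+1)).support, nf l < x := by
        intro x hx
        have h3 := Finset.min'_le _ x hx
        omega
      have htail : W (i'+1) ∈ tailSpanSet Y (nf l) := by
        refine ⟨hWb.1 _, ?_⟩
        have hvY : W (i'+1) ∈ Submodule.span F (Set.range Y) := (hWD _ (hWentry (i'+1))).2.1
        obtain ⟨c, hc⟩ := Finsupp.mem_span_range_iff_exists_finsupp.1 hvY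
        have hdisjY : ∀ m n, m ≠ n → Disjoint (Y m).support (Y n).support :=
          fun m n h => block_disjoint hYb h
        have hsupp : (W (i'+1)).support = c.support.biUnion fun b => (Y b).support := by
          rw [← hc]
          exact support_finsupp_sum hdisjY c
        rw [← hc]
        have hrfl : (c.sum fun b a => a • Y b) = ∑ b ∈ c.support, c b • Y b := rfl
        rw [hrfl]
        apply Submodule.sum_mem
        intro b hb
        apply Submodule.smul_mem
        apply Submodule.subset_span
        refine ⟨⟨b, rfl⟩, ?_⟩
        intro x hx
        apply hsuppabove
        rw [hsupp]
        exact Finset.mem_biUnion.2 ⟨b, hb, hx⟩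
      exact (hnf l hlb htail).2
  refine ⟨W, hWb, hWmem, ?_⟩
  intro k
  refine fun v hv => ?_
  obtain ⟨hvne, hvmem⟩ := hv
  refine ⟨hvne, ?_⟩
  have hle : Submodule.span F (Set.range (fun m => W (m + k))) ≤
      Submodule.span F (Set.range (Xs (List.ofFn fun i : Fin k => (W i).support))) := by
    rw [Submodule.span_le]
    rintro x ⟨m, rfl⟩
    exact hent k (m + k) (by omega)
  exact hle hvmem
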